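/- Fix λC > 0, λI > 0, n ≥ 1 a natural number, and T > 0. Define V(s) = Σ_{l=1}^{n} C(n,l) · (λC)^{n-l} (λI)^l / (s·l·(λC+λI)) · [T - 1/(s·l·(λC+λI)) + e^{-s·l·(λC+λI)·T}/(s·l·(λC+λI))] for s > 0 (omitting the positive constant prefactor). Then V is strictly decreasing in s on (0, ∞). -/

import Mathlib

/-- Key inequality: `2(1 - e^{-u}) < u(1 + e^{-u})` for `u > 0`. -/
lemma key_ineq (u : ℝ) (hu : 0 < u) :
    2 * (1 - Real.exp (-u)) < u * (1 + Real.exp (-u)) := by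
  set h : ℝ → ℝ := fun x => x * (1 + Real.exp (-x)) - 2 * (1 - Real.exp (-x)) with hh
  have hd : ∀ x : ℝ, HasDerivAt h (1 - Real.exp (-x) - x * Real.exp (-x)) x := by
    intro x
    have he : HasDerivAt (fun x : ℝ => Real.exp (-x)) (-Real.exp (-x)) x := by
      simpa using (hasDerivAt_neg x).exp
    have h1 : HasDerivAt (fun x : ℝ => x * (1 + Real.exp (-x)))
        (1 * (1 + Real.exp (-x)) + x * (0 + -Real.exp (-x))) x :=
      (hasDerivAt_id x).mul ((hasDerivAt_const x 1).add he)
    have h2 : HasDerivAt (fun x : ℝ => 2 * (1 - Real.exp (-x)))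
        (2 * (0 - (-Real.exp (-x)))) x :=
      ((hasDerivAt_const x 1).sub he).const_mul 2
    have := h1.sub h2
    exact this.congr_deriv (by ring)
  have hmono : StrictMonoOn h (Set.Ici 0) := by
    apply strictMonoOn_of_deriv_pos (convex_Ici 0)
    · exact fun x _ => (hd x).continuousAt.continuousWithinAt
    · intro x hx
      rw [interior_Ici] at hx
      rw [(hd x).deriv]
      have h1 : x + 1 < Real.exp x := Real.add_one_lt_exp (ne_of_gt hx)
      have h2 : 0 < Real.exp x := Real.exp_pos x
      have h3 : Real.exp (-x) = (Real.exp x)⁻¹ := Real.exp_neg x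
      rw [h3]
      rw [show 1 - (Real.exp x)⁻¹ - x * (Real.exp x)⁻¹
          = (Real.exp x - (1 + x)) / Real.exp x by field_simp; ring]
      apply div_pos (by linarith) h2
  have := hmono (Set.self_mem_Ici) (Set.mem_Ici.mpr hu.le) hu
  simp only [hh] at this
  simp only [neg_zero, Real.exp_zero] at this
  linarith

/-- The per-term shape function. -/
noncomputable def fV (T x : ℝ) : ℝ :=
  T * x⁻¹ - (x ^ 2)⁻¹ + Real.exp (-(x * T)) * (x ^ 2)⁻¹

lemma fV_hasDerivAt (T x : ℝ) (hx : x ≠ 0) :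
    HasDerivAt (fV T)
      (T * (-(x ^ 2)⁻¹) - (-(2 * x) / (x ^ 2) ^ 2)
        + (Real.exp (-(x * T)) * (-T) * (x ^ 2)⁻¹
          + Real.exp (-(x * T)) * (-(2 * x) / (x ^ 2) ^ 2))) x := by
  have hx2 : x ^ 2 ≠ 0 := pow_ne_zero 2 hx
  have hinv : HasDerivAt (fun x : ℝ => (x ^ 2)⁻¹) (-(2 * x) / (x ^ 2) ^ 2) x := by
    have := (hasDerivAt_pow 2 x).inv hx2
    exact this.congr_deriv (by simp)
  have h1 : HasDerivAt (fun x : ℝ => T * x⁻¹) (T * (-(x ^ 2)⁻¹)) x := by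
    have := (hasDerivAt_inv hx).const_mul T
    simpa [pow_two] using this
  have hexp : HasDerivAt (fun x : ℝ => Real.exp (-(x * T))) (Real.exp (-(x * T)) * (-T)) x := by
    have : HasDerivAt (fun x : ℝ => -(x * T)) (-T) x := by
      exact ((hasDerivAt_id x).mul_const T).neg.congr_deriv (by simp)
    simpa using this.exp
  exact (h1.sub hinv).add (hexp.mul hinv)

lemma fV_strictAntiOn (T : ℝ) (hT : 0 < T) : StrictAntiOn (fV T) (Set.Ioi 0) := by
  apply strictAntiOn_of_deriv_neg (convex_Ioi 0)
  · exact fun x hx => (fV_hasDerivAt T x (ne_of_gt hx)).continuousAt.continuousWithinAt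
  · intro x hx
    rw [interior_Ioi] at hx
    have hx' : (0:ℝ) < x := hx
    rw [(fV_hasDerivAt T x (ne_of_gt hx')).deriv]
    have hk := key_ineq (x * T) (mul_pos hx' hT)
    set e := Real.exp (-(x * T)) with he
    have hx3 : (0:ℝ) < x ^ 3 := by positivity
    have heq : T * (-(x ^ 2)⁻¹) - (-(2 * x) / (x ^ 2) ^ 2)
        + (e * (-T) * (x ^ 2)⁻¹ + e * (-(2 * x) / (x ^ 2) ^ 2))
        = (2 * (1 - e) - x * T * (1 + e)) / x ^ 3 := by
      field_simp
      ring
    rw [heq]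
    apply div_neg_of_neg_of_pos _ hx3
    linarith

/-- The variance of the communication time (up to a positive constant prefactor),
as a function of the speed scaling factor `s`. -/
noncomputable def V (lC lI T : ℝ) (n : ℕ) (s : ℝ) : ℝ :=
  ∑ l ∈ Finset.Icc 1 n,
    (n.choose l : ℝ) * lC ^ (n - l) * lI ^ l / (s * l * (lC + lI)) *
      (T - 1 / (s * l * (lC + lI)) +
        Real.exp (-(s * l * (lC + lI) * T)) / (s * l * (lC + lI)))

theorem variance_strictAnti (lC lI T : ℝ) (n : ℕ)
    (hC : 0 < lC) (hI : 0 < lI) (hn : 1 ≤ n) (hT : 0 < T) :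
    StrictAntiOn (V lC lI T n) (Set.Ioi 0) := by
  intro a ha b hb hab
  have ha' : (0:ℝ) < a := ha
  have hb' : (0:ℝ) < b := hb
  unfold V
  apply Finset.sum_lt_sum_of_nonempty ⟨1, Finset.mem_Icc.mpr ⟨le_refl 1, hn⟩⟩
  intro l hl
  have hl1 : 1 ≤ l := (Finset.mem_Icc.mp hl).1
  have hlpos : (0:ℝ) < l := by exact_mod_cast hl1
  have hApos : (0:ℝ) < (l:ℝ) * (lC + lI) := by positivity
  have hcpos : (0:ℝ) < (n.choose l : ℝ) * lC ^ (n - l) * lI ^ l := by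
    have : 0 < n.choose l := Nat.choose_pos (Finset.mem_Icc.mp hl).2
    positivity
  have hrw : ∀ s : ℝ, 0 < s →
      (n.choose l : ℝ) * lC ^ (n - l) * lI ^ l / (s * l * (lC + lI)) *
        (T - 1 / (s * l * (lC + lI)) +
          Real.exp (-(s * l * (lC + lI) * T)) / (s * l * (lC + lI)))
      = ((n.choose l : ℝ) * lC ^ (n - l) * lI ^ l) * fV T (s * ((l:ℝ) * (lC + lI))) := by
    intro s hs
    have hs0 : s * (l:ℝ) * (lC + lI) ≠ 0 := by positivity
    simp only [fV]
    rw [show s * ((l:ℝ) * (lC + lI)) * T = s * l * (lC + lI) * T by ring]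
    field_simp
  rw [hrw a ha', hrw b hb']
  apply mul_lt_mul_of_pos_left _ hcpos
  exact fV_strictAntiOn T hT (Set.mem_Ioi.mpr (by positivity))
    (Set.mem_Ioi.mpr (by positivity))
    (mul_lt_mul_of_pos_right hab hApos)
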